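/- For every real number t with 0 < t ≤ 1 and every real number a > 0, the kernel N(x, y) = (x − y)² + a(x² + y²)^t on ℝ × ℝ is a conditionally negative-definite kernel: it is symmetric, and for every n ≥ 2, every x₁, …, xₙ ∈ ℝ, and every c₁, …, cₙ ∈ ℂ with ∑_{j=1}^n c_j = 0, one has ∑_{j=1}^n ∑_{k=1}^n c_j · conj(c_k) · N(x_j, x_k) ≤ 0. -/

import Mathlib

open Finset ComplexOrder MeasureTheory Set Real

-- integrability of the basic integrand
lemma int_base {t : ℝ} (ht0 : 0 < t) (ht1 : t < 1) :
    IntegrableOn (fun l : ℝ => (1 - Real.exp (-l)) * l ^ (-t-1)) (Ioi (0:ℝ)) := by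
  have hmeas : ∀ s : Set ℝ, s ⊆ Ioi 0 → MeasurableSet s →
      AEStronglyMeasurable (fun l : ℝ => (1 - Real.exp (-l)) * l ^ (-t-1)) (volume.restrict s) := by
    intro s hs hms
    apply ContinuousOn.aestronglyMeasurable _ hms
    intro l hl
    have hl0 : l ≠ 0 := ne_of_gt (hs hl)
    exact (((continuous_const.sub (Real.continuous_exp.comp continuous_neg)).continuousAt).mul
      (Real.continuousAt_rpow_const l _ (Or.inl hl0))).continuousWithinAt
  have h1 : IntegrableOn (fun l : ℝ => (1 - Real.exp (-l)) * l ^ (-t-1)) (Ioc (0:ℝ) 1) := by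
    have hg : IntegrableOn (fun l : ℝ => l ^ (-t)) (Ioc (0:ℝ) 1) := by
      have := intervalIntegral.intervalIntegrable_rpow' (a := 0) (b := 1) (r := -t) (by linarith)
      rwa [intervalIntegrable_iff_integrableOn_Ioc_of_le (by norm_num)] at this
    refine hg.mono' (hmeas _ Ioc_subset_Ioi_self measurableSet_Ioc) ?_
    filter_upwards [ae_restrict_mem measurableSet_Ioc] with l hl
    have hl0 : 0 < l := hl.1
    have h1 : 0 ≤ 1 - Real.exp (-l) := by
      have := Real.exp_le_one_iff.mpr (by linarith : -l ≤ 0); linarith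
    have h2 : 1 - Real.exp (-l) ≤ l := by
      have := Real.add_one_le_exp (-l); linarith
    have h3 : (0:ℝ) ≤ l ^ (-t-1) := Real.rpow_nonneg hl0.le _
    rw [Real.norm_eq_abs, abs_of_nonneg (mul_nonneg h1 h3)]
    calc (1 - Real.exp (-l)) * l ^ (-t-1) ≤ l * l ^ (-t-1) := by nlinarith
    _ = l ^ (-t) := by
        have h := (Real.rpow_add hl0 1 (-t-1)).symm
        rw [Real.rpow_one] at h
        rw [h]; ring_nf
  have h2 : IntegrableOn (fun l : ℝ => (1 - Real.exp (-l)) * l ^ (-t-1)) (Ioi (1:ℝ)) := by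
    have hg : IntegrableOn (fun l : ℝ => l ^ (-t-1)) (Ioi (1:ℝ)) :=
      integrableOn_Ioi_rpow_of_lt (by linarith) one_pos
    refine hg.mono' (hmeas _ (Ioi_subset_Ioi one_pos.le) measurableSet_Ioi) ?_
    filter_upwards [ae_restrict_mem measurableSet_Ioi] with l hl
    have hl0 : (0:ℝ) < l := lt_trans one_pos hl
    have h1 : 0 ≤ 1 - Real.exp (-l) := by
      have := Real.exp_le_one_iff.mpr (by linarith : -l ≤ 0); linarith
    have h2 : 1 - Real.exp (-l) ≤ 1 := by linarith [Real.exp_pos (-l)]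
    have h3 : (0:ℝ) ≤ l ^ (-t-1) := Real.rpow_nonneg hl0.le _
    rw [Real.norm_eq_abs, abs_of_nonneg (mul_nonneg h1 h3)]
    nlinarith
  have := h1.union h2
  rwa [Ioc_union_Ioi_eq_Ioi (le_refl (0:ℝ) |>.trans zero_le_one)] at this

lemma int_pos {t : ℝ} (ht0 : 0 < t) (ht1 : t < 1) :
    0 < ∫ l in Ioi (0:ℝ), (1 - Real.exp (-l)) * l ^ (-t-1) := by
  rw [setIntegral_pos_iff_support_of_nonneg_ae _ (int_base ht0 ht1)]
  · refine lt_of_lt_of_le ?_ (measure_mono (show Ioi (0:ℝ) ⊆ _ ∩ Ioi 0 from ?_))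
    · simp [Real.volume_Ioi]
    · intro l hl
      refine ⟨?_, hl⟩
      have hl0 : (0:ℝ) < l := hl
      have h1 : 0 < 1 - Real.exp (-l) := by
        have : Real.exp (-l) < 1 := Real.exp_lt_one_iff.mpr (by linarith)
        linarith
      have h3 : (0:ℝ) < l ^ (-t-1) := Real.rpow_pos_of_pos hl0 _
      exact ne_of_gt (mul_pos h1 h3)
  · filter_upwards [ae_restrict_mem measurableSet_Ioi] with l hl
    have hl0 : (0:ℝ) < l := hl
    have h1 : 0 ≤ 1 - Real.exp (-l) := by
      have := Real.exp_le_one_iff.mpr (by linarith : -l ≤ 0); linarith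
    exact mul_nonneg h1 (Real.rpow_nonneg hl0.le _)

lemma int_s {t : ℝ} (ht0 : 0 < t) (ht1 : t < 1) {s : ℝ} (hs : 0 ≤ s) :
    IntegrableOn (fun l : ℝ => (1 - Real.exp (-(l*s))) * l ^ (-t-1)) (Ioi (0:ℝ)) := by
  rcases eq_or_lt_of_le hs with rfl | hs
  · refine (integrable_zero ℝ ℝ (volume.restrict (Ioi (0:ℝ)))).congr ?_
    filter_upwards with l
    simp
  · have base := int_base ht0 ht1
    have h1 : IntegrableOn (fun l : ℝ => (1 - Real.exp (-(s*l))) * (s*l) ^ (-t-1)) (Ioi (0:ℝ)) := by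
      have := (integrableOn_Ioi_comp_mul_left_iff
        (fun l : ℝ => (1 - Real.exp (-l)) * l ^ (-t-1)) 0 hs).mpr (by rwa [mul_zero])
      exact this
    have h2 : IntegrableOn
        (fun l : ℝ => s ^ (t+1) * ((1 - Real.exp (-(s*l))) * (s*l) ^ (-t-1))) (Ioi (0:ℝ)) := by
      exact h1.const_mul (s ^ (t+1))
    refine h2.congr_fun (fun l hl => ?_) measurableSet_Ioi
    have hl0 : (0:ℝ) < l := hl
    beta_reduce
    rw [Real.mul_rpow hs.le hl0.le, mul_comm s l]
    rw [show s ^ (t+1) * ((1 - Real.exp (-(l*s))) * (s ^ (-t-1) * l ^ (-t-1)))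
        = (s ^ (t+1) * s ^ (-t-1)) * ((1 - Real.exp (-(l*s))) * l ^ (-t-1)) by ring,
      ← Real.rpow_add hs]
    norm_num

lemma int_rep {t : ℝ} (ht0 : 0 < t) (ht1 : t < 1) {s : ℝ} (hs : 0 ≤ s) :
    ∫ l in Ioi (0:ℝ), (1 - Real.exp (-(l*s))) * l ^ (-t-1)
      = s ^ t * ∫ l in Ioi (0:ℝ), (1 - Real.exp (-l)) * l ^ (-t-1) := by
  rcases eq_or_lt_of_le hs with rfl | hs
  · rw [Real.zero_rpow (ne_of_gt ht0), zero_mul]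
    refine integral_eq_zero_of_ae ?_
    filter_upwards with l
    simp
  · have key : ∀ l ∈ Ioi (0:ℝ), (1 - Real.exp (-(l*s))) * l ^ (-t-1)
        = s ^ (t+1) • ((1 - Real.exp (-(s*l))) * (s*l) ^ (-t-1)) := by
      intro l hl
      have hl0 : (0:ℝ) < l := hl
      rw [Real.mul_rpow hs.le hl0.le, smul_eq_mul, mul_comm s l]
      rw [show s ^ (t+1) * ((1 - Real.exp (-(l*s))) * (s ^ (-t-1) * l ^ (-t-1)))
          = (s ^ (t+1) * s ^ (-t-1)) * ((1 - Real.exp (-(l*s))) * l ^ (-t-1)) by ring,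
        ← Real.rpow_add hs]
      norm_num
    rw [setIntegral_congr_fun measurableSet_Ioi key, integral_smul,
      integral_comp_mul_left_Ioi (fun l : ℝ => (1 - Real.exp (-l)) * l ^ (-t-1)) 0 hs,
      mul_zero, smul_eq_mul, smul_eq_mul, ← mul_assoc]
    congr 1
    rw [← Real.rpow_neg_one s, ← Real.rpow_add hs]
    ring_nf

lemma cnd_rpow {t : ℝ} (ht0 : 0 < t) (ht1 : t < 1) (n : ℕ) (s : Fin n → ℝ)
    (hs : ∀ j, 0 ≤ s j) (b : Fin n → ℝ) (hb : ∑ j, b j = 0) :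
    ∑ j, ∑ k, b j * b k * (s j + s k) ^ t ≤ 0 := by
  set I1 : ℝ := ∫ l in Ioi (0:ℝ), (1 - Real.exp (-l)) * l ^ (-t-1) with hI1
  have hI1pos : 0 < I1 := int_pos ht0 ht1
  have key : (∑ j, ∑ k, b j * b k * (s j + s k) ^ t) * I1 ≤ 0 := by
    have eq1 : (∑ j, ∑ k, b j * b k * (s j + s k) ^ t) * I1
        = ∑ p : Fin n × Fin n, ∫ l in Ioi (0:ℝ),
            b p.1 * b p.2 * ((1 - Real.exp (-(l*(s p.1 + s p.2)))) * l ^ (-t-1)) := by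
      rw [Fintype.sum_prod_type, Finset.sum_mul]
      refine Finset.sum_congr rfl fun j _ => ?_
      rw [Finset.sum_mul]
      refine Finset.sum_congr rfl fun k _ => ?_
      rw [mul_assoc, ← int_rep ht0 ht1 (add_nonneg (hs j) (hs k)),
        ← integral_const_mul]
    have eq2 : (∑ p : Fin n × Fin n, ∫ l in Ioi (0:ℝ),
          b p.1 * b p.2 * ((1 - Real.exp (-(l*(s p.1 + s p.2)))) * l ^ (-t-1)))
        = ∫ l in Ioi (0:ℝ), ∑ p : Fin n × Fin n,
            b p.1 * b p.2 * ((1 - Real.exp (-(l*(s p.1 + s p.2)))) * l ^ (-t-1)) := by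
      rw [integral_finset_sum]
      intro p _
      exact ((int_s ht0 ht1 (add_nonneg (hs p.1) (hs p.2))).const_mul _)
    rw [eq1, eq2]
    refine integral_nonpos_of_ae ?_
    filter_upwards [ae_restrict_mem measurableSet_Ioi] with l hl
    simp only [Pi.zero_apply]
    have hl0 : (0:ℝ) < l := hl
    have expand : ∑ p : Fin n × Fin n,
        b p.1 * b p.2 * ((1 - Real.exp (-(l*(s p.1 + s p.2)))) * l ^ (-t-1))
        = ((∑ j, b j)^2 - (∑ j, b j * Real.exp (-(l * s j)))^2) * l ^ (-t-1) := by
      rw [sq, sq, Finset.sum_mul_sum, Finset.sum_mul_sum, ← Finset.sum_sub_distrib,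
        Finset.sum_mul, Fintype.sum_prod_type]
      refine Finset.sum_congr rfl fun j _ => ?_
      rw [← Finset.sum_sub_distrib, Finset.sum_mul]
      refine Finset.sum_congr rfl fun k _ => ?_
      have : Real.exp (-(l * (s j + s k)))
          = Real.exp (-(l * s j)) * Real.exp (-(l * s k)) := by
        rw [← Real.exp_add]; ring_nf
      rw [this]; ring
    rw [expand, hb]
    have h3 : (0:ℝ) ≤ l ^ (-t-1) := Real.rpow_nonneg hl0.le _
    nlinarith [sq_nonneg (∑ j, b j * Real.exp (-(l * s j)))]
  nlinarith

lemma cnd_real {t A : ℝ} (ht0 : 0 < t) (ht1 : t ≤ 1) (hA : 0 < A) (n : ℕ)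
    (x : Fin n → ℝ) (b : Fin n → ℝ) (hb : ∑ j, b j = 0) :
    ∑ j, ∑ k, b j * b k * ((x j - x k)^2 + A * (x j ^ 2 + x k ^ 2) ^ t) ≤ 0 := by
  have split : ∑ j, ∑ k, b j * b k * ((x j - x k)^2 + A * (x j ^ 2 + x k ^ 2) ^ t)
      = (∑ j, ∑ k, b j * b k * (x j - x k)^2)
        + A * ∑ j, ∑ k, b j * b k * (x j ^ 2 + x k ^ 2) ^ t := by
    rw [Finset.mul_sum, ← Finset.sum_add_distrib]
    refine Finset.sum_congr rfl fun j _ => ?_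
    rw [Finset.mul_sum, ← Finset.sum_add_distrib]
    refine Finset.sum_congr rfl fun k _ => ?_
    ring
  have hsq : ∑ j, ∑ k, b j * b k * (x j - x k)^2 ≤ 0 := by
    have key : ∑ j, ∑ k, b j * b k * (x j - x k)^2
        = (∑ j, b j * x j ^ 2) * (∑ j, b j) + (∑ j, b j) * (∑ j, b j * x j ^ 2)
          - 2 * ((∑ j, b j * x j) * (∑ j, b j * x j)) := by
      rw [Finset.sum_mul_sum, Finset.sum_mul_sum, Finset.sum_mul_sum, Finset.mul_sum,
        ← Finset.sum_add_distrib, ← Finset.sum_sub_distrib]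
      refine Finset.sum_congr rfl fun j _ => ?_
      rw [Finset.mul_sum, ← Finset.sum_add_distrib, ← Finset.sum_sub_distrib]
      refine Finset.sum_congr rfl fun k _ => ?_
      ring
    rw [key, hb]
    nlinarith [mul_self_nonneg (∑ j, b j * x j)]
  have hrp : ∑ j, ∑ k, b j * b k * (x j ^ 2 + x k ^ 2) ^ t ≤ 0 := by
    rcases eq_or_lt_of_le ht1 with rfl | ht1'
    · have key : ∑ j, ∑ k, b j * b k * (x j ^ 2 + x k ^ 2) ^ (1:ℝ)
          = (∑ j, b j * x j ^ 2) * (∑ j, b j) + (∑ j, b j) * (∑ j, b j * x j ^ 2) := by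
        rw [Finset.sum_mul_sum, Finset.sum_mul_sum, ← Finset.sum_add_distrib]
        refine Finset.sum_congr rfl fun j _ => ?_
        rw [← Finset.sum_add_distrib]
        refine Finset.sum_congr rfl fun k _ => ?_
        rw [Real.rpow_one]; ring
      rw [key, hb]; simp
    · exact cnd_rpow ht0 ht1' n (fun j => x j ^ 2) (fun j => sq_nonneg (x j)) b hb
  rw [split]
  nlinarith [mul_nonneg hA.le (neg_nonneg.mpr hrp)]

lemma cnd_complex (n : ℕ) (r : Fin n → Fin n → ℝ) (hsymm : ∀ j k, r j k = r k j)
    (hre : ∀ b : Fin n → ℝ, ∑ j, b j = 0 → ∑ j, ∑ k, b j * b k * r j k ≤ 0)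
    (c : Fin n → ℂ) (hc : ∑ j, c j = 0) :
    ∑ j, ∑ k, c j * (starRingEnd ℂ) (c k) * ((r j k : ℝ) : ℂ) ≤ 0 := by
  have hare : ∑ j, (c j).re = 0 := by rw [← Complex.re_sum, hc, Complex.zero_re]
  have haim : ∑ j, (c j).im = 0 := by rw [← Complex.im_sum, hc, Complex.zero_im]
  rw [Complex.le_def]
  constructor
  · rw [Complex.zero_re, Complex.re_sum]
    have e : ∀ j : Fin n, (∑ k, c j * (starRingEnd ℂ) (c k) * ((r j k : ℝ) : ℂ)).re
        = ∑ k, ((c j).re * (c k).re * r j k + (c j).im * (c k).im * r j k) := by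
      intro j
      rw [Complex.re_sum]
      refine Finset.sum_congr rfl fun k _ => ?_
      simp only [Complex.mul_re, Complex.mul_im, Complex.conj_re, Complex.conj_im,
        Complex.ofReal_re, Complex.ofReal_im]
      ring
    simp_rw [e, Finset.sum_add_distrib]
    exact add_nonpos (hre _ hare) (hre _ haim)
  · rw [Complex.zero_im, Complex.im_sum]
    have e : ∀ j k : Fin n, (c j * (starRingEnd ℂ) (c k) * ((r j k : ℝ) : ℂ)).im
        = ((c j).im * (c k).re - (c j).re * (c k).im) * r j k := by
      intro j k
      simp only [Complex.mul_re, Complex.mul_im, Complex.conj_re, Complex.conj_im,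
        Complex.ofReal_re, Complex.ofReal_im]
      ring
    simp_rw [Complex.im_sum, e]
    have hswap : (∑ j, ∑ k, ((c j).im * (c k).re - (c j).re * (c k).im) * r j k)
        = ∑ j, ∑ k, (((c k).im * (c j).re - (c k).re * (c j).im) * r k j) :=
      Finset.sum_comm
    have hneg : (∑ j, ∑ k, (((c k).im * (c j).re - (c k).re * (c j).im) * r k j))
        = - ∑ j, ∑ k, ((c j).im * (c k).re - (c j).re * (c k).im) * r j k := by
      rw [← Finset.sum_neg_distrib]
      refine Finset.sum_congr rfl fun j _ => ?_
      rw [← Finset.sum_neg_distrib]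
      refine Finset.sum_congr rfl fun k _ => ?_
      rw [hsymm j k]; ring
    linarith [hswap.trans hneg]


/-- For `0 < t ≤ 1` and `a > 0`, the kernel
`N(x,y) = (x−y)² + a(x²+y²)^t` is conditionally negative-definite on `ℝ × ℝ`:
it is symmetric, and for all `n ≥ 2`, all `x ∈ ℝⁿ` and `c ∈ ℂⁿ` with `∑ c_j = 0`,
`∑_{j,k} c_j conj(c_k) N(x_j, x_k) ≤ 0`. -/
theorem stmt4 (t a : ℝ) (ht0 : 0 < t) (ht1 : t ≤ 1) (ha : 0 < a) :
    (∀ x y : ℝ, ((x - y) ^ 2 + a * (x ^ 2 + y ^ 2) ^ t)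
      = ((y - x) ^ 2 + a * (y ^ 2 + x ^ 2) ^ t)) ∧
    (∀ (n : ℕ), 2 ≤ n → ∀ (x : Fin n → ℝ) (c : Fin n → ℂ), (∑ j, c j) = 0 →
      (∑ j, ∑ k, c j * (starRingEnd ℂ) (c k) *
        (((x j - x k) ^ 2 + a * ((x j) ^ 2 + (x k) ^ 2) ^ t : ℝ) : ℂ)) ≤ 0) := by
  constructor
  · intro x y
    rw [add_comm (y ^ 2) (x ^ 2), show (y - x) ^ 2 = (x - y) ^ 2 by ring]
  · intro n hn x c hc
    exact cnd_complex n (fun j k => (x j - x k) ^ 2 + a * ((x j) ^ 2 + (x k) ^ 2) ^ t)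
      (fun j k => by
        show (x j - x k) ^ 2 + a * (x j ^ 2 + x k ^ 2) ^ t
          = (x k - x j) ^ 2 + a * (x k ^ 2 + x j ^ 2) ^ t
        rw [add_comm ((x k) ^ 2) ((x j) ^ 2), show (x k - x j) ^ 2 = (x j - x k) ^ 2 by ring])
      (fun b hb => cnd_real ht0 ht1 ha n x b hb) c hc
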